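/- arXiv:2209.13879 — 6 statements merged into one kernel-verified Lean document; each statement's English description precedes it below -/
import Mathlib

section
/- If an integer square Heffter array H(n;k) exists, then nk ≡ 0 or 3 (mod 4). -/
private lemma gauss_icc (m : ℕ) :
    2 * ∑ x ∈ Finset.Icc (1:ℤ) (m:ℤ), x = m * (m + 1) := by
  induction m with
  | zero => simp
  | succ m ih =>
    have h : Finset.Icc (1:ℤ) ((m:ℤ)+1) = insert ((m:ℤ)+1) (Finset.Icc (1:ℤ) (m:ℤ)) := by
      ext x; simp [Finset.mem_Icc]; omega
    push_cast
    rw [h, Finset.sum_insert (by simp)]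
    push_cast at ih; ring_nf; ring_nf at ih; linarith

/-- If an integer square Heffter array `H(n;k)` exists, then
`nk ≡ 0` or `3 (mod 4)`. The array is an `n × n` partially filled integer matrix with `k`
filled cells in each row and column, whose entries have absolute values exactly
`{1,...,nk}` each occurring once, and every row and column sums to `0` in `ℤ`. -/
theorem integer_square_heffter_congruence (n k : ℕ) (A : Fin n → Fin n → Option ℤ)
    (hrow : ∀ i, (Finset.univ.filter fun j => (A i j).isSome).card = k)
    (hcol : ∀ j, (Finset.univ.filter fun i => (A i j).isSome).card = k)
    (hrange : ∀ i j a, A i j = some a → 1 ≤ |a| ∧ |a| ≤ (n * k : ℤ))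
    (habs : ∀ x : ℤ, 1 ≤ x → x ≤ (n * k : ℤ) →
      ∃! p : Fin n × Fin n, ∃ a, A p.1 p.2 = some a ∧ |a| = x)
    (hrsum : ∀ i, ∑ j, (A i j).getD 0 = 0)
    (hcsum : ∀ j, ∑ i, (A i j).getD 0 = 0) :
    n * k % 4 = 0 ∨ n * k % 4 = 3 := by
  classical
  set f : Fin n × Fin n → ℤ := fun p => (A p.1 p.2).getD 0 with hf
  set T : Finset (Fin n × Fin n) :=
    Finset.univ.filter (fun p => (A p.1 p.2).isSome) with hT
  -- total sum is 0
  have htotal : ∑ p : Fin n × Fin n, f p = 0 := by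
    rw [Fintype.sum_prod_type]
    simp [hf, hrsum]
  have hTsum : ∑ p ∈ T, f p = 0 := by
    rw [← htotal]
    apply Finset.sum_subset (Finset.subset_univ _)
    intro p _ hp
    simp only [hT, Finset.mem_filter, Finset.mem_univ, true_and] at hp
    simp only [hf]
    rw [Option.not_isSome_iff_eq_none] at hp
    simp [hp]
  -- sum of absolute values over T equals the Gauss sum
  have hbij : ∑ p ∈ T, |f p| = ∑ x ∈ Finset.Icc (1:ℤ) ((n*k : ℕ) : ℤ), x := by
    apply Finset.sum_bij (fun p _ => |f p|)
    · intro p hp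
      simp only [hT, Finset.mem_filter, Finset.mem_univ, true_and] at hp
      obtain ⟨a, ha⟩ := Option.isSome_iff_exists.mp hp
      have := hrange p.1 p.2 a ha
      simp only [Finset.mem_Icc, hf, ha, Option.getD_some]
      push_cast
      exact this
    · intro p hp q hq hpq
      simp only [hT, Finset.mem_filter, Finset.mem_univ, true_and] at hp hq
      obtain ⟨a, ha⟩ := Option.isSome_iff_exists.mp hp
      obtain ⟨b, hb⟩ := Option.isSome_iff_exists.mp hq
      have hr := hrange p.1 p.2 a ha
      obtain ⟨p₀, -, huniq⟩ := habs |a| hr.1 hr.2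
      have hfa : f p = a := by simp [hf, ha]
      have hfb : f q = b := by simp [hf, hb]
      have h1 : p = p₀ := huniq p ⟨a, ha, rfl⟩
      have h2 : q = p₀ := huniq q ⟨b, hb, by rw [hfa, hfb] at hpq; exact hpq.symm⟩
      rw [h1, h2]
    · intro x hx
      simp only [Finset.mem_Icc] at hx
      have hx2 : x ≤ (n * k : ℤ) := by push_cast at hx ⊢; exact hx.2
      obtain ⟨p, ⟨a, ha, habs_a⟩, -⟩ := habs x hx.1 hx2
      refine ⟨p, ?_, ?_⟩
      · simp only [hT, Finset.mem_filter, Finset.mem_univ, true_and]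
        exact Option.isSome_iff_exists.mpr ⟨a, ha⟩
      · simp [hf, ha, habs_a]
    · intro p _; rfl
  -- parity: sum of |f p| ≡ sum of f p mod 2
  have hpar : (2 : ℤ) ∣ ∑ p ∈ T, |f p| := by
    have : ∑ p ∈ T, |f p| = (∑ p ∈ T, (|f p| - f p)) + ∑ p ∈ T, f p := by
      rw [← Finset.sum_add_distrib]; simp
    rw [this, hTsum, add_zero]
    apply Finset.dvd_sum
    intro p _
    rcases abs_choice (f p) with h | h
    · rw [h]; simp
    · rw [h]; exact ⟨-(f p), by ring⟩
  -- so 4 ∣ nk(nk+1)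
  have hg := gauss_icc (n * k)
  rw [hbij] at hpar
  obtain ⟨c, hc⟩ := hpar
  have h4 : ((n*k : ℕ) : ℤ) * ((n*k : ℕ) + 1) = 4 * c := by rw [← hg, hc]; ring
  -- conclude mod 4
  have h4' : (n * k) * (n * k + 1) % 4 = 0 := by
    have : ((n * k) * (n * k + 1) : ℤ) = 4 * c := by push_cast; push_cast at h4; linarith
    have h5 : (4 : ℤ) ∣ ((n * k) * (n * k + 1) : ℕ) := ⟨c, by push_cast; push_cast at this; linarith⟩
    have h6 : (4 : ℕ) ∣ (n * k) * (n * k + 1) := by exact_mod_cast h5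
    omega
  set m := n * k
  obtain ⟨q, r, hr4, hqr⟩ : ∃ q r, r < 4 ∧ m = 4*q + r :=
    ⟨m/4, m%4, Nat.mod_lt _ (by norm_num), (Nat.div_add_mod m 4).symm⟩
  have hmr : m % 4 = r := by omega
  rw [hmr]
  obtain ⟨X, hX⟩ : ∃ X, m * (m+1) = 4*X + r*(r+1) :=
    ⟨4*q*q + 2*q*r + q, by rw [hqr]; ring⟩
  interval_cases r <;> omega
end

section
/- Let T be a subset of an abelian group G with 0 ∉ T, containing no pair {x,-x}, with |T| = 5 and with the sum of the elements of T equal to 0. Then T admits a simple ordering. -/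
private lemma key_nodup {G : Type*} [AddCommGroup G] (a b c d e : G)
    (hsum : a + b + c + d + e = 0)
    (ha : a ≠ 0) (hc : c ≠ 0) (hd : d ≠ 0) (he : e ≠ 0) (hb : b ≠ 0)
    (hab : a + b ≠ 0) (hbc : b + c ≠ 0) (hcd : c + d ≠ 0) (hde : d + e ≠ 0)
    (hea : e + a ≠ 0) :
    ([a, a + b, a + b + c, a + b + c + d, a + b + c + d + e] : List G).Nodup := by
  simp only [List.nodup_cons, List.mem_cons, List.not_mem_nil, or_false, not_or,
    List.nodup_nil, and_true, List.mem_singleton]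
  refine ⟨⟨?_, ?_, ?_, ?_⟩, ⟨?_, ?_, ?_⟩, ⟨?_, ?_⟩, ?_⟩
  · intro h; exact hb (left_eq_add.mp h)
  · intro h; rw [add_assoc] at h; exact hbc (left_eq_add.mp h)
  · intro h
    rw [add_assoc, add_assoc] at h
    have h' : b + (c + d) = 0 := left_eq_add.mp h
    apply hea
    have h2 : e + a = a + b + c + d + e - (b + (c + d)) := by abel
    rw [h2, hsum, h', sub_zero]
  · rw [hsum]; exact ha
  · intro h; exact hc (left_eq_add.mp h)
  · intro h; rw [add_assoc] at h; exact hcd (left_eq_add.mp h)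
  · rw [hsum]; exact hab
  · intro h; exact hd (left_eq_add.mp h)
  · rw [hsum]
    intro h
    apply hde
    have h2 : d + e = a + b + c + d + e - (a + b + c) := by abel
    rw [h2, hsum, h, sub_zero]
  · rw [hsum]
    refine ⟨fun h => ?_, not_false⟩
    apply he
    have h2 : e = a + b + c + d + e - (a + b + c + d) := by abel
    rw [h2, hsum, h, sub_zero]

/-- Let `T` be a subset of an abelian group `G` with `0 ∉ T`, containing no pair
`{x,-x}`, with `|T| = 5` and sum of elements `0`. Then `T` admits a simple ordering, i.e. an
ordering of its elements whose partial sums are pairwise distinct. -/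
theorem five_subset_has_simple_ordering {G : Type*} [AddCommGroup G] [DecidableEq G]
    (T : Finset G) (h0 : (0 : G) ∉ T) (hcard : T.card = 5)
    (hpair : ∀ x ∈ T, -x ∉ T) (hsum : ∑ x ∈ T, x = 0) :
    ∃ l : List G, l.Nodup ∧ l.toFinset = T ∧
      ((List.range l.length).map fun i => (l.take (i + 1)).sum).Nodup := by
  have hne0 : ∀ x ∈ T, x ≠ 0 := fun x hx h => h0 (h ▸ hx)
  have hp : ∀ x ∈ T, ∀ y ∈ T, x + y ≠ 0 := by
    intro x hx y hy h
    exact hpair x hx (by rwa [neg_eq_of_add_eq_zero_right h])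
  have hl : T.toList.length = 5 := by simp [hcard]
  obtain ⟨a, b, c, d, e, hle⟩ : ∃ a b c d e, T.toList = [a, b, c, d, e] := by
    match hle : T.toList, hl with
    | [a, b, c, d, e], _ => exact ⟨a, b, c, d, e, rfl⟩
  have hmem : ∀ x ∈ [a, b, c, d, e], x ∈ T := by
    intro x hx
    rw [← Finset.mem_toList, hle]; exact hx
  have ha := hmem a (by simp)
  have hb := hmem b (by simp)
  have hc := hmem c (by simp)
  have hd := hmem d (by simp)
  have he := hmem e (by simp)
  have hsum5 : a + b + c + d + e = 0 := by
    have := Finset.sum_map_toList T id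
    rw [List.map_id] at this
    rw [hle] at this
    simpa [add_assoc, hsum] using this
  have hnd : ([a, b, c, d, e] : List G).Nodup := hle ▸ T.nodup_toList
  refine ⟨[a, b, c, d, e], hnd, ?_, ?_⟩
  · rw [← hle]; exact T.toList_toFinset
  · have : (List.range 5).map
        (fun i => (([a, b, c, d, e] : List G).take (i + 1)).sum) =
        [a, a + b, a + b + c, a + b + c + d, a + b + c + d + e] := by
      simp [List.range_succ, add_assoc]
    simp only [List.length_cons, List.length_nil]
    rw [show (0:ℕ)+1+1+1+1+1 = 5 from rfl, this]
    exact key_nodup a b c d e hsum5 (hne0 a ha) (hne0 c hc) (hne0 d hd)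
      (hne0 e he) (hne0 b hb) (hp a ha b hb) (hp b hb c hc) (hp c hc d hd)
      (hp d hd e he) (hp e he a ha)
end

section
/- Let T ⊆ Z_v \ {0} with |T| = v - 1 (i.e. T = Z_v \ {0}) and suppose the sum of the elements of T is nonzero (equivalently, v is even). Then there exists an ordering of the elements of T such that all partial sums are distinct and nonzero. -/
/-- The `k`-th term of the ordering: `1, -2, 3, -4, ...` (as an integer). -/
def bhF (k : ℕ) : ℤ := if k % 2 = 0 then (k + 1 : ℤ) else -(k + 1 : ℤ)

/-- The `i`-th partial sum: `1, -1, 2, -2, ...` (as an integer). -/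
def bhG (i : ℕ) : ℤ := if i % 2 = 0 then (((i + 2) / 2 : ℕ) : ℤ) else -(((i + 2) / 2 : ℕ) : ℤ)

lemma bhG_sum (i : ℕ) : ((List.range (i + 1)).map bhF).sum = bhG i := by
  induction i with
  | zero => norm_num [bhF, bhG, List.range_succ]
  | succ n ih =>
    rw [List.range_succ, List.map_append, List.sum_append, ih]
    simp only [bhF, bhG, List.map_cons, List.map_nil, List.sum_cons, List.sum_nil]
    split_ifs <;> push_cast <;> omega

lemma bh_cast_eq_zero {v : ℕ} {a : ℤ} (h : ((a : ZMod v)) = 0) : (v : ℤ) ∣ a :=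
  (ZMod.intCast_zmod_eq_zero_iff_dvd _ _).mp h

lemma bh_dvd_of_cast_eq {v : ℕ} {a b : ℤ} (h : ((a : ZMod v)) = (b : ZMod v)) :
    (v : ℤ) ∣ a - b := by
  apply bh_cast_eq_zero
  push_cast
  rw [sub_eq_zero]
  exact h

lemma bhG_ne_zero {v : ℕ} (i : ℕ) (hi : i < v - 1) : ((bhG i : ℤ) : ZMod v) ≠ 0 := by
  intro h
  have hd := bh_cast_eq_zero h
  have h0 := Int.eq_zero_of_abs_lt_dvd hd
    (by simp only [bhG, abs_lt]; split_ifs <;> constructor <;> omega)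
  simp only [bhG] at h0
  split_ifs at h0 <;> omega

lemma bhG_injOn {v : ℕ} (hv : v % 2 = 0) {i j : ℕ} (hi : i < v - 1) (hj : j < v - 1)
    (h : ((bhG i : ℤ) : ZMod v) = ((bhG j : ℤ) : ZMod v)) : i = j := by
  have hd := bh_dvd_of_cast_eq h
  have h0 := Int.eq_zero_of_abs_lt_dvd hd
    (by simp only [bhG, abs_lt]; split_ifs <;> constructor <;> omega)
  simp only [bhG] at h0
  split_ifs at h0 <;> omega

lemma bhF_ne_zero {v : ℕ} (k : ℕ) (hk : k < v - 1) : ((bhF k : ℤ) : ZMod v) ≠ 0 := by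
  intro h
  have hd := bh_cast_eq_zero h
  have h0 := Int.eq_zero_of_abs_lt_dvd hd
    (by simp only [bhF, abs_lt]; split_ifs <;> constructor <;> omega)
  simp only [bhF] at h0
  split_ifs at h0 <;> omega

lemma bhF_injOn {v : ℕ} (hv : v % 2 = 0) {k k' : ℕ} (hk : k < v - 1) (hk' : k' < v - 1)
    (h : ((bhF k : ℤ) : ZMod v) = ((bhF k' : ℤ) : ZMod v)) : k = k' := by
  have hd := bh_dvd_of_cast_eq h
  rcases Nat.mod_two_eq_zero_or_one k with h1 | h1 <;>
    rcases Nat.mod_two_eq_zero_or_one k' with h2 | h2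
  -- same parity cases: bound the difference by v
  · have h0 := Int.eq_zero_of_abs_lt_dvd hd
      (by simp only [bhF, abs_lt, if_pos h1, if_pos h2]; omega)
    simp only [bhF, if_pos h1, if_pos h2] at h0
    omega
  · -- opposite parity: difference is odd but 2 ∣ v ∣ difference
    exfalso
    have h2v : (2 : ℤ) ∣ (v : ℤ) := by omega
    obtain ⟨c, hc⟩ := h2v.trans hd
    simp only [bhF, if_pos h1, if_neg (by omega : ¬ k' % 2 = 0)] at hc
    omega
  · exfalso
    have h2v : (2 : ℤ) ∣ (v : ℤ) := by omega
    obtain ⟨c, hc⟩ := h2v.trans hd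
    simp only [bhF, if_neg (by omega : ¬ k % 2 = 0), if_pos h2] at hc
    omega
  · have h0 := Int.eq_zero_of_abs_lt_dvd hd
      (by simp only [bhF, abs_lt, if_neg (by omega : ¬ k % 2 = 0),
            if_neg (by omega : ¬ k' % 2 = 0)]; omega)
    simp only [bhF, if_neg (by omega : ¬ k % 2 = 0), if_neg (by omega : ¬ k' % 2 = 0)] at h0
    omega

/-- If `v` is odd, the sum of all nonzero elements of `ZMod v` is `0`. -/
lemma bh_sum_eq_zero_of_odd {v : ℕ} [NeZero v] (hv : v % 2 = 1) :
    ∑ x ∈ (Finset.univ \ {0} : Finset (ZMod v)), x = 0 := by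
  apply Finset.sum_involution (fun x _ => -x)
  · intro x _; exact add_neg_cancel x
  · intro x hx h hnegx
    apply h
    have h2 : (2 : ZMod v) * x = 0 := by
      rw [two_mul]
      nth_rewrite 2 [← hnegx]
      exact add_neg_cancel x
    have hu : IsUnit (2 : ZMod v) := by
      have := (ZMod.isUnit_iff_coprime 2 v).mpr
        (Nat.coprime_two_left.mpr (Nat.odd_iff.mpr hv))
      simpa using this
    have := hu.mul_right_eq_zero.mp h2
    simp only [Finset.mem_sdiff, Finset.mem_univ, Finset.mem_singleton, true_and] at hx
    exact absurd this hx
  · intro x _; simp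
  · intro x hx
    simp only [Finset.mem_sdiff, Finset.mem_univ, Finset.mem_singleton, true_and,
      neg_eq_zero] at hx ⊢
    exact hx

/-- Let `T = Z_v \ {0}` (so `|T| = v - 1`) and suppose the sum of the elements
of `T` is nonzero (equivalently, `v` is even). Then there is an ordering of the elements of
`T` all of whose partial sums are distinct and nonzero. (Bode–Harborth, case `|T| = v-1`.) -/
theorem bode_harborth_full_set (v : ℕ) [NeZero v]
    (T : Finset (ZMod v)) (hT : T = Finset.univ \ {0})
    (hsum : ∑ x ∈ T, x ≠ 0) :
    ∃ l : List (ZMod v), l.Nodup ∧ l.toFinset = T ∧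
      ((List.range l.length).map fun i => (l.take (i + 1)).sum).Nodup ∧
      ∀ i < l.length, (l.take (i + 1)).sum ≠ 0 := by
  -- v is even
  have hv : v % 2 = 0 := by
    rcases Nat.mod_two_eq_zero_or_one v with h | h
    · exact h
    · exact absurd (hT ▸ bh_sum_eq_zero_of_odd h) hsum
  have hv0 : v ≠ 0 := NeZero.ne v
  -- partial sums of the candidate list
  have htake : ∀ i < v - 1,
      (((List.range (v - 1)).map (fun k => ((bhF k : ℤ) : ZMod v))).take (i + 1)).sum
        = ((bhG i : ℤ) : ZMod v) := by
    intro i hi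
    rw [← List.map_take, List.take_range, Nat.min_eq_left (by omega), ← bhG_sum]
    rw [show (fun k => ((bhF k : ℤ) : ZMod v)) = ((Int.cast : ℤ → ZMod v) ∘ bhF) from rfl,
      ← List.map_map]
    exact (Int.cast_list_sum _).symm
  -- the ordering
  refine ⟨(List.range (v - 1)).map (fun k => ((bhF k : ℤ) : ZMod v)), ?_, ?_, ?_, ?_⟩
  · exact List.Nodup.map_on
      (fun x hx y hy hxy =>
        bhF_injOn hv (List.mem_range.mp hx) (List.mem_range.mp hy) hxy)
      List.nodup_range
  · -- toFinset = T
    apply Finset.eq_of_subset_of_card_le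
    · intro x hx
      simp only [List.mem_toFinset, List.mem_map, List.mem_range] at hx
      obtain ⟨k, hk, rfl⟩ := hx
      rw [hT]
      simp only [Finset.mem_sdiff, Finset.mem_univ, Finset.mem_singleton, true_and]
      exact bhF_ne_zero k hk
    · rw [hT,
        List.card_toFinset, (List.Nodup.map_on
          (fun x hx y hy hxy =>
            bhF_injOn hv (List.mem_range.mp hx) (List.mem_range.mp hy) hxy)
          List.nodup_range).dedup,
        Finset.card_sdiff_of_subset (Finset.subset_univ _)]
      simp [ZMod.card]
  · -- partial sums are distinct
    have hlen : ((List.range (v - 1)).map (fun k => ((bhF k : ℤ) : ZMod v))).length = v - 1 := by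
      simp
    rw [hlen]
    refine List.Nodup.map_on ?_ List.nodup_range
    intro i hi j hj hij
    rw [htake i (List.mem_range.mp hi), htake j (List.mem_range.mp hj)] at hij
    exact bhG_injOn hv (List.mem_range.mp hi) (List.mem_range.mp hj) hij
  · -- partial sums are nonzero
    intro i hi
    simp only [List.length_map, List.length_range] at hi
    rw [htake i hi]
    exact bhG_ne_zero i hi
end

section
/- Let ω_r and ω_c be compatible orderings of the rows and columns of a Heffter array H(m,n;h,k), meaning ω_r is a product of m disjoint cycles (one per row, of length h, on the filled cells), ω_c is a product of n disjoint cycles (one per column, of length k), and ω_r ∘ ω_c is a single cycle of length nk. Then either (1) m, n, h, k are all odd; or (2) m is odd, n is even and h is even; or (3) m is even, n is odd and k is even. -/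
/-- Let `ω_r` and `ω_c` be compatible orderings of the rows and columns of a
Heffter array `H(m,n;h,k)` (so `mh = nk`): `ω_r` is a permutation of the filled cells which is
a product of `m` disjoint `h`-cycles, `ω_c` a product of `n` disjoint `k`-cycles, and
`ω_r ∘ ω_c` is a single cycle of length `nk`. Then either `m,n,h,k` are all odd; or `m` is odd,
`n` is even and `h` is even; or `m` is even, `n` is odd and `k` is even. -/
theorem compatible_orderings_parity (m n h k : ℕ) (hmh : m * h = n * k)
    {α : Type*} [Fintype α] [DecidableEq α]
    (σr σc : Equiv.Perm α)
    (hr : σr.cycleType = Multiset.replicate m h)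
    (hc : σc.cycleType = Multiset.replicate n k)
    (hcomp : (σr * σc).cycleType = {n * k}) :
    (Odd m ∧ Odd n ∧ Odd h ∧ Odd k) ∨
    (Odd m ∧ Even n ∧ Even h) ∨
    (Even m ∧ Odd n ∧ Even k) := by
  have hsr := Equiv.Perm.sign_of_cycleType σr
  have hsc := Equiv.Perm.sign_of_cycleType σc
  have hsrc := Equiv.Perm.sign_of_cycleType (σr * σc)
  rw [hr] at hsr
  rw [hc] at hsc
  rw [hcomp] at hsrc
  simp only [Multiset.sum_replicate, Multiset.card_replicate, smul_eq_mul,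
    Multiset.sum_singleton, Multiset.card_singleton] at hsr hsc hsrc
  have hmul : Equiv.Perm.sign (σr * σc) = σr.sign * σc.sign := map_mul _ _ _
  rw [hsr, hsc, hsrc, ← pow_add] at hmul
  -- hmul : (-1)^(n*k+1) = (-1)^(m*h+m+(n*k+n)) in ℤˣ
  have hone : ((-1 : ℤˣ)) ^ (n * k + 1 + (m * h + m + (n * k + n))) = 1 := by
    rw [pow_add, hmul, ← pow_add, ← two_mul, pow_mul, neg_one_sq, one_pow]
  have heven : Even (n * k + 1 + (m * h + m + (n * k + n))) := by
    rwa [neg_one_pow_eq_one_iff_even (by decide : (-1 : ℤˣ) ≠ 1)] at hone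
  rw [hmh] at heven
  -- so nk + m + n is odd
  have hkey : Odd (n * k + m + n) := by
    rcases Nat.even_or_odd (n * k + m + n) with he | ho
    · exfalso
      have : ¬ Even (n * k + 1 + (n * k + m + (n * k + n))) := by
        rcases he with ⟨t, ht⟩
        rcases Nat.even_or_odd (n * k) with ⟨s, hs⟩ | ⟨s, hs⟩ <;>
          · intro ⟨u, hu⟩; omega
      exact this heven
    · exact ho
  rcases Nat.even_or_odd m with hm | hm <;> rcases Nat.even_or_odd n with hn | hn
  · -- m even, n even : contradiction
    exfalso
    have : Even (n * k + m + n) := by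
      have h1 : Even (n * k) := hn.mul_right k
      exact (h1.add hm).add hn
    exact (Nat.not_odd_iff_even.mpr this) hkey
  · -- m even, n odd : k even
    have hnk : Even (n * k) := by
      rcases Nat.even_or_odd (n * k) with he | ho
      · exact he
      · exfalso
        have : Even (n * k + m + n) := by
          rcases ho with ⟨s, hs⟩; rcases hm with ⟨t, ht⟩; rcases hn with ⟨u, hu⟩
          exact ⟨s + t + u + 1, by omega⟩
        exact (Nat.not_odd_iff_even.mpr this) hkey
    right; right
    refine ⟨hm, hn, ?_⟩
    rcases (Nat.even_mul.mp hnk) with h1 | h1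
    · exact absurd h1 (Nat.not_even_iff_odd.mpr hn)
    · exact h1
  · -- m odd, n even : h even
    have hnk : Even (n * k) := hn.mul_right k
    have hmheven : Even (m * h) := by rwa [hmh]
    right; left
    refine ⟨hm, hn, ?_⟩
    rcases (Nat.even_mul.mp hmheven) with h1 | h1
    · exact absurd h1 (Nat.not_even_iff_odd.mpr hm)
    · exact h1
  · -- m odd, n odd : all odd
    have hnk : Odd (n * k) := by
      rcases Nat.even_or_odd (n * k) with he | ho
      · exfalso
        have : Even (n * k + m + n) := by
          rcases he with ⟨s, hs⟩; rcases hm with ⟨t, ht⟩; rcases hn with ⟨u, hu⟩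
          exact ⟨s + t + u + 1, by omega⟩
        exact (Nat.not_odd_iff_even.mpr this) hkey
      · exact ho
    have hk : Odd k := (Nat.odd_mul.mp hnk).2
    have hmhodd : Odd (m * h) := by rwa [hmh]
    have hh : Odd h := (Nat.odd_mul.mp hmhodd).2
    exact Or.inl ⟨hm, hn, hh, hk⟩
end

section
/- Let A be a Heffter array H(m,n;h,k) and suppose each row admits a simple ordering. For each row i, let Γ_i be the closed walk in Z_{2mh+1} whose vertices are 0 and the partial sums s_1,...,s_{h-1} of the chosen simple ordering of row i (with s_h = 0); Γ_i is an h-cycle. Then the multiset of differences ⋃_i Δ(Γ_i), where Δ(Γ) = {x - y : x,y adjacent vertices of Γ}, equals Z_{2mh+1} \ {0}, i.e. the collection {Γ_1,...,Γ_m} is a (2mh+1, C_h, 1)-difference family. -/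
/-- The vertex list of the closed walk `Γ_i` attached to a row `r` of length `h`:
the partial sums `0 = s_0, s_1, ..., s_{h-1}` of the (simple) ordering of the row. -/
def rowCycleVertices {v : ℕ} (h : ℕ) (r : List (ZMod v)) : List (ZMod v) :=
  (List.range h).map fun j => (r.take j).sum

/-- The multiset of differences `ΔΓ = {x - y : x, y adjacent vertices}` of a cycle given by
its cyclically ordered vertex list. -/
def cycleDiffs {v : ℕ} (l : List (ZMod v)) : Multiset (ZMod v) :=
  (↑(List.zipWith (· - ·) (l.rotate 1) l) : Multiset (ZMod v))
    + (↑(List.zipWith (· - ·) l (l.rotate 1)) : Multiset (ZMod v))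

-- main zipWith computation
lemma zip_eq {v h : ℕ} (hh : 1 ≤ h) (r : List (ZMod v)) (hlen : r.length = h)
    (hsum : r.sum = 0) :
    List.zipWith (· - ·) ((rowCycleVertices h r).rotate 1) (rowCycleVertices h r) = r := by
  set l := rowCycleVertices h r with hl
  have hll : l.length = h := by simp [hl, rowCycleVertices]
  apply List.ext_getElem
  · simp [hll, hlen, List.length_zipWith]
  intro j hj hj'
  have hjh : j < h := by simpa [List.length_zipWith, hll] using hj
  rw [List.getElem_zipWith]
  have hgl : ∀ k (hk : k < h), l[k]'(by omega) = (r.take k).sum := by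
    intro k hk
    simp [hl, rowCycleVertices]
  have hrot : (l.rotate 1)[j]'(by simpa [hll] using hjh) = l[(j+1) % h]'(by
      simpa [hll] using Nat.mod_lt _ (by omega)) := by
    simp [List.getElem_rotate, hll]
  rw [hrot, hgl j hjh]
  by_cases hcase : j + 1 < h
  · have : (j+1) % h = j + 1 := Nat.mod_eq_of_lt hcase
    rw [hgl ((j+1) % h) (Nat.mod_lt _ (by omega)), this]
    rw [List.sum_take_succ _ _ (by omega)]
    abel
  · have hjt : j = h - 1 := by omega
    have hmod : (j+1) % h = 0 := by
      have : j + 1 = h := by omega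
      simp [this]
    rw [hgl ((j+1) % h) (Nat.mod_lt _ (by omega))]
    have h1 : (r.take ((j+1) % h)).sum = 0 := by simp [hmod]
    have h2 : (r.take (j+1)).sum = (r.take j).sum + r[j] :=
      List.sum_take_succ _ _ (by omega)
    have h3 : (r.take (j+1)).sum = 0 := by
      have : r.take (j+1) = r := List.take_of_length_le (by omega)
      rw [this, hsum]
    rw [h1]
    rw [h3] at h2
    linear_combination h2

lemma zip_neg {v : ℕ} : ∀ (a b : List (ZMod v)),
    List.zipWith (· - ·) a b = (List.zipWith (· - ·) b a).map (fun x => -x)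
  | [], [] => rfl
  | [], _ :: _ => rfl
  | _ :: _, [] => rfl
  | x :: a, y :: b => by simp [zip_neg a b]

lemma vertices_nodup {v h : ℕ} (hh : 1 ≤ h) (r : List (ZMod v)) (hlen : r.length = h)
    (hsum : r.sum = 0)
    (hsimple : ((List.range h).map fun j => (r.take (j + 1)).sum).Nodup) :
    (rowCycleVertices h r).Nodup := by
  obtain ⟨n, rfl⟩ : ∃ n, h = n + 1 := ⟨h - 1, by omega⟩
  have e1 : (List.range (n+1)).map (fun j => (r.take (j + 1)).sum)
      = ((List.range n).map fun j => (r.take (j + 1)).sum) ++ [0] := by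
    rw [List.range_succ, List.map_append]
    simp only [List.map_cons, List.map_nil]
    congr 1
    rw [List.take_of_length_le (by omega), hsum]
  rw [e1] at hsimple
  have h1 : ((List.range n).map fun j => (r.take (j + 1)).sum).Nodup :=
    (List.nodup_append.mp hsimple).1
  have h2 : (0 : ZMod v) ∉ ((List.range n).map fun j => (r.take (j + 1)).sum) := by
    intro hmem
    have := (List.nodup_append'.mp hsimple).2.2
    exact this hmem (by simp)
  have e2 : rowCycleVertices (n+1) r
      = 0 :: ((List.range n).map fun j => (r.take (j + 1)).sum) := by
    rw [rowCycleVertices, List.range_succ_eq_map]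
    simp [List.map_map, Function.comp]
  rw [e2, List.nodup_cons]
  exact ⟨h2, h1⟩


/-- Let the rows of a Heffter array `H(m,n;h,k)` (mh = nk) be given, each of
length `h`, with nonzero entries, summing to `0` in `Z_{2mh+1}`, each with distinct partial
sums (a simple ordering), and with exactly one of `±x` occurring exactly once among all rows
for every nonzero `x`. Then each vertex list `Γ_i` is a genuine `h`-cycle (h distinct
vertices), and the multiset of differences `⋃_i ΔΓ_i` is exactly `Z_{2mh+1} \ {0}`:
`{Γ_1,...,Γ_m}` is a `(2mh+1, C_h, 1)`-difference family. -/
theorem rows_give_difference_family (m h : ℕ) (hh : 3 ≤ h)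
    (r : Fin m → List (ZMod (2 * m * h + 1)))
    (hlen : ∀ i, (r i).length = h)
    (h0 : ∀ i, (0 : ZMod (2 * m * h + 1)) ∉ r i)
    (hsum : ∀ i, (r i).sum = 0)
    (hsimple : ∀ i, ((List.range h).map fun j => ((r i).take (j + 1)).sum).Nodup)
    (hpairs : ∀ x : ZMod (2 * m * h + 1), x ≠ 0 →
      (∑ i, (↑(r i) : Multiset (ZMod (2 * m * h + 1))).count x)
        + (∑ i, (↑(r i) : Multiset (ZMod (2 * m * h + 1))).count (-x)) = 1) :
    (∀ i, (rowCycleVertices h (r i)).Nodup ∧ (rowCycleVertices h (r i)).length = h) ∧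
    ∑ i, cycleDiffs (rowCycleVertices h (r i))
      = (Finset.univ.erase (0 : ZMod (2 * m * h + 1))).val := by
  constructor
  · intro i
    refine ⟨vertices_nodup (by omega) _ (hlen i) (hsum i) (hsimple i), ?_⟩
    simp [rowCycleVertices]
  · have hcd : ∀ i, cycleDiffs (rowCycleVertices h (r i))
        = (↑(r i) : Multiset _) + (↑((r i).map (fun x => -x)) : Multiset _) := by
      intro i
      rw [cycleDiffs, zip_eq (by omega) _ (hlen i) (hsum i),
        zip_neg, zip_eq (by omega) _ (hlen i) (hsum i)]
    simp only [hcd]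
    ext x
    rw [Multiset.count_sum']
    simp only [Multiset.count_add]
    by_cases hx : x = 0
    · subst hx
      have : ∀ i, Multiset.count (0 : ZMod (2*m*h+1)) (↑(r i) : Multiset (ZMod (2*m*h+1)))
          + Multiset.count (0 : ZMod (2*m*h+1))
            (↑((r i).map fun x => -x) : Multiset (ZMod (2*m*h+1))) = 0 := by
        intro i
        have hA : Multiset.count (0 : ZMod (2*m*h+1))
            (↑(r i) : Multiset (ZMod (2*m*h+1))) = 0 :=
          Multiset.count_eq_zero.mpr (fun hm => h0 i (Multiset.mem_coe.mp hm))
        have hB : Multiset.count (0 : ZMod (2*m*h+1))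
            (↑((r i).map fun x => -x) : Multiset (ZMod (2*m*h+1))) = 0 := by
          refine Multiset.count_eq_zero.mpr ?_
          intro hm
          obtain ⟨y, hy, hy0⟩ := List.mem_map.mp (Multiset.mem_coe.mp hm)
          have : y = 0 := neg_eq_zero.mp hy0
          exact h0 i (this ▸ hy)
        rw [hA, hB]
      rw [Finset.sum_congr rfl (fun i _ => this i)]
      simp [Multiset.count_eq_zero_of_notMem, Finset.mem_erase]
    · have hneg : ∀ i, Multiset.count x (↑((r i).map fun x => -x) : Multiset _)
          = Multiset.count (-x) (↑(r i) : Multiset _) := by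
        intro i
        have : (↑((r i).map fun x => -x) : Multiset (ZMod (2*m*h+1)))
            = Multiset.map (fun y => -y) (↑(r i) : Multiset (ZMod (2*m*h+1))) := by simp
        rw [this]
        have := Multiset.count_map_eq_count' (fun y : ZMod (2*m*h+1) => -y)
          ((r i : List (ZMod (2*m*h+1))) : Multiset (ZMod (2*m*h+1))) neg_injective (-x)
        simpa using this
      simp only [hneg]
      rw [Finset.sum_add_distrib, hpairs x hx]
      have : x ∈ Finset.univ.erase (0 : ZMod (2*m*h+1)) := Finset.mem_erase.mpr ⟨hx, Finset.mem_univ x⟩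
      rw [Multiset.count_eq_one_of_mem (Finset.univ.erase _).nodup this]
end

section
/- If an m×n array with nonzero entries in Z_{2nk+1} satisfies all conditions of a Heffter array H(n;k) in the square case (m = n, h = k) and n admits a transversal T of filled cells (a set of n filled cells, one in each row and one in each column), then the array obtained by negating the entry in each cell of T is a non-zero sum Heffter array NH(n;k): it has the same skeleton, still represents each pair {x,-x} exactly once, and every row sum and column sum is nonzero in Z_{2nk+1}. -/
lemma neg_two_mul_ne_zero (n k : ℕ) (a : ZMod (2 * n * k + 1)) (ha : a ≠ 0) :
    -(2 * a) ≠ 0 := by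
  intro h
  have h2 : (2 * a : ZMod (2 * n * k + 1)) = 0 := by
    have := congrArg Neg.neg h
    simpa using this
  have hu : IsUnit (2 : ZMod (2 * n * k + 1)) := by
    have : NeZero (2 * n * k + 1) := ⟨Nat.succ_ne_zero _⟩
    have hcop : Nat.Coprime 2 (2 * n * k + 1) := by
      rw [Nat.Prime.coprime_iff_not_dvd Nat.prime_two]
      rintro ⟨c, hc⟩
      rw [Nat.mul_assoc] at hc
      omega
    have := (ZMod.isUnit_iff_coprime 2 (2 * n * k + 1)).mpr hcop
    simpa using this
  exact ha ((hu.mul_right_eq_zero).mp h2)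

/-- If an `n × n` array with nonzero entries in `Z_{2nk+1}` satisfies all the
conditions of a square Heffter array `H(n;k)` and admits a transversal `T` of filled cells
(one filled cell in each row and each column, described by a permutation `σ`), then negating
the entry in each cell of `T` yields a non-zero sum Heffter array `NH(n;k)`: same skeleton,
each pair `{x,-x}` still represented exactly once, and every row and column sum is nonzero. -/
theorem negate_transversal_gives_nonzero_sum_heffter (n k : ℕ)
    (A : Fin n → Fin n → Option (ZMod (2 * n * k + 1)))
    (hne : ∀ i j a, A i j = some a → a ≠ 0)
    (hrow : ∀ i, (Finset.univ.filter fun j => (A i j).isSome).card = k)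
    (hcol : ∀ j, (Finset.univ.filter fun i => (A i j).isSome).card = k)
    (hpairs : ∀ x : ZMod (2 * n * k + 1), x ≠ 0 →
      ∃! p : Fin n × Fin n, A p.1 p.2 = some x ∨ A p.1 p.2 = some (-x))
    (hrsum : ∀ i, ∑ j, (A i j).getD 0 = 0)
    (hcsum : ∀ j, ∑ i, (A i j).getD 0 = 0)
    (σ : Equiv.Perm (Fin n))
    (hσ : ∀ i, (A i (σ i)).isSome)
    (B : Fin n → Fin n → Option (ZMod (2 * n * k + 1)))
    (hB : ∀ i j, B i j = if j = σ i then (A i j).map (fun a => -a) else A i j) :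
    (∀ i j, (B i j).isSome ↔ (A i j).isSome) ∧
    (∀ x : ZMod (2 * n * k + 1), x ≠ 0 →
      ∃! p : Fin n × Fin n, B p.1 p.2 = some x ∨ B p.1 p.2 = some (-x)) ∧
    (∀ i, ∑ j, (B i j).getD 0 ≠ 0) ∧
    (∀ j, ∑ i, (B i j).getD 0 ≠ 0) := by
  -- the key pointwise description
  have key : ∀ i j, (B i j).getD 0 =
      (A i j).getD 0 - (if j = σ i then 2 * (A i j).getD 0 else 0) := by
    intro i j
    rw [hB]
    by_cases h : j = σ i
    · subst h
      obtain ⟨a, ha⟩ := Option.isSome_iff_exists.mp (hσ i)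
      simp [ha]
      ring
    · simp [h]
  have hsome : ∀ i j, (B i j).isSome ↔ (A i j).isSome := by
    intro i j
    rw [hB]
    by_cases h : j = σ i <;> simp [h]
  have hequiv : ∀ (x : ZMod (2 * n * k + 1)) (p : Fin n × Fin n),
      (B p.1 p.2 = some x ∨ B p.1 p.2 = some (-x)) ↔
      (A p.1 p.2 = some x ∨ A p.1 p.2 = some (-x)) := by
    intro x p
    rw [hB]
    by_cases h : p.2 = σ p.1
    · rw [if_pos h]
      cases hA : A p.1 p.2 with
      | none => simp
      | some a =>
        simp only [Option.map_some, Option.some.injEq, hA]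
        constructor
        · rintro (h1 | h1)
          · exact Or.inr (neg_eq_iff_eq_neg.mp h1)
          · exact Or.inl (neg_injective h1)
        · rintro (h1 | h1)
          · exact Or.inr (by rw [h1])
          · exact Or.inl (by rw [h1, neg_neg])
    · simp [h]
  refine ⟨hsome, ?_, ?_, ?_⟩
  · intro x hx
    obtain ⟨p, hp, hu⟩ := hpairs x hx
    exact ⟨p, (hequiv x p).mpr hp, fun q hq => hu q ((hequiv x q).mp hq)⟩
  · intro i
    have : ∑ j, (B i j).getD 0 = -(2 * (A i (σ i)).getD 0) := by
      simp only [key, Finset.sum_sub_distrib, hrsum i, Finset.sum_ite_eq' Finset.univ (σ i),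
        Finset.mem_univ, if_true]
      ring
    rw [this]
    obtain ⟨a, ha⟩ := Option.isSome_iff_exists.mp (hσ i)
    rw [ha]
    exact neg_two_mul_ne_zero n k a (hne i (σ i) a ha)
  · intro j
    have hcond : ∀ i : Fin n, (j = σ i) ↔ (i = σ.symm j) := by
      intro i
      rw [Equiv.eq_symm_apply, eq_comm]
    have : ∑ i, (B i j).getD 0 = -(2 * (A (σ.symm j) j).getD 0) := by
      simp only [key, hcond, Finset.sum_sub_distrib, hcsum j,
        Finset.sum_ite_eq' Finset.univ (σ.symm j), Finset.mem_univ, if_true]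
      ring
    rw [this]
    have hσj : (A (σ.symm j) j).isSome := by
      have := hσ (σ.symm j)
      simpa using this
    obtain ⟨a, ha⟩ := Option.isSome_iff_exists.mp hσj
    rw [ha]
    exact neg_two_mul_ne_zero n k a (hne _ j a ha)
end
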